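/- (Theorem 3.4(a), Euclidean case.) Let p̄ ∈ F, let each ψ_u (u = 1,…,t) be directionally differentiable at p̄, and assume ψ_u is strictly pseudo-convex at p̄ for every active index u ∈ J(p̄). Let the interval-valued objectives φ_s (s = 1,…,l), defined on the nonempty open convex set E, be weakly directionally differentiable at p̄ and LU-strictly pseudo-convex at p̄. Suppose that for every feasible point p ∈ F there exist scalars λ_s^L > 0, λ_s^U > 0 (s = 1,…,l) and μ_u^L ≥ 0, μ_u^U ≥ 0 (u = 1,…,t), possibly depending on p, such that: (i) Σ_{s=1}^l λ_s^L (φ_s^L)'(p̄; p − p̄) + Σ_{u=1}^t μ_u^L ψ_u'(p̄; p − p̄) ≥ 0; (ii) Σ_{s=1}^l λ_s^U (φ_s^U)'(p̄; p − p̄) + Σ_{u=1}^t μ_u^U ψ_u'(p̄; p − p̄) ≥ 0; and (iii) μ_u^L ψ_u(p̄) = 0 = μ_u^U ψ_u(p̄) for all u. Then p̄ is a type-I Pareto optimal solution of (MIVOP2). -/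
import Mathlib


/-- One-sided directional derivative of `f` at `p` in direction `w`, with value `d`. -/
def HasDirDeriv {V : Type*} [NormedAddCommGroup V] [NormedSpace ℝ V]
    (f : V → ℝ) (p w : V) (d : ℝ) : Prop :=
  Filter.Tendsto (fun α : ℝ => (f (p + α • w) - f p) / α)
    (nhdsWithin 0 (Set.Ioi 0)) (nhds d)

/-- `f` is convex at the point `p` (relative to the convex set `E`). -/
def ConvexAtPt {V : Type*} [NormedAddCommGroup V] [NormedSpace ℝ V]
    (E : Set V) (f : V → ℝ) (p : V) : Prop :=
  ∀ q ∈ E, ∀ α : ℝ, 0 ≤ α → α ≤ 1 →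
    f ((1 - α) • p + α • q) ≤ (1 - α) * f p + α * f q

/-- `f` (with directional-derivative function `f'` at `pbar`) is pseudo-convex at `pbar`. -/
def PseudoConvexAt {V : Type*} [NormedAddCommGroup V] [NormedSpace ℝ V]
    (E : Set V) (f : V → ℝ) (f' : V → ℝ) (pbar : V) : Prop :=
  ∀ p ∈ E, f p < f pbar → f' (p - pbar) < 0

/-- `f` (with directional-derivative function `f'` at `pbar`) is strictly
pseudo-convex at `pbar`. -/
def StrictPseudoConvexAt {V : Type*} [NormedAddCommGroup V] [NormedSpace ℝ V]
    (E : Set V) (f : V → ℝ) (f' : V → ℝ) (pbar : V) : Prop :=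
  ∀ p ∈ E, p ≠ pbar → f p ≤ f pbar → f' (p - pbar) < 0

/-- `[aL, aU] ≤_LU [bL, bU]`. -/
def LUle (aL aU bL bU : ℝ) : Prop := aL ≤ bL ∧ aU ≤ bU

/-- `[aL, aU] <_LU [bL, bU]`. -/
def LUlt (aL aU bL bU : ℝ) : Prop := LUle aL aU bL bU ∧ (aL ≠ bL ∨ aU ≠ bU)

/-- `[aL, aU] ≤_CW [bL, bU]`. -/
def CWle (aL aU bL bU : ℝ) : Prop :=
  (aL + aU) / 2 ≤ (bL + bU) / 2 ∧ (aU - aL) / 2 ≤ (bU - bL) / 2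

/-- `[aL, aU] <_CW [bL, bU]`. -/
def CWlt (aL aU bL bU : ℝ) : Prop := CWle aL aU bL bU ∧ (aL ≠ bL ∨ aU ≠ bU)

/-- Theorem 3.4(a), Euclidean case: KKT sufficiency for type-I
Pareto optimal solutions under LU-strict pseudo-convexity of the objectives and
strict pseudo-convexity of the active constraints. -/
theorem kkt_type_I_LU_strict_pseudoconvex
    {V : Type*} [NormedAddCommGroup V] [NormedSpace ℝ V]
    (E : Set V) (hEne : E.Nonempty) (hEopen : IsOpen E) (hEconv : Convex ℝ E)
    (l t : ℕ) (φL φU : Fin l → V → ℝ) (ψ : Fin t → V → ℝ)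
    (hφint : ∀ s, ∀ x ∈ E, φL s x ≤ φU s x)
    (pbar : V) (hpbarE : pbar ∈ E) (hpbarF : ∀ u, ψ u pbar ≤ 0)
    (φL' φU' : Fin l → V → ℝ)
    (hφLd : ∀ s w, HasDirDeriv (φL s) pbar w (φL' s w))
    (hφUd : ∀ s w, HasDirDeriv (φU s) pbar w (φU' s w))
    (ψ' : Fin t → V → ℝ)
    (hψd : ∀ u w, HasDirDeriv (ψ u) pbar w (ψ' u w))
    -- strict pseudo-convexity of the active constraints at `pbar`
    (hψspc : ∀ u, ψ u pbar = 0 → StrictPseudoConvexAt E (ψ u) (ψ' u) pbar)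
    -- LU-strict pseudo-convexity of the objectives at `pbar`
    (hφLspc : ∀ s, StrictPseudoConvexAt E (φL s) (φL' s) pbar)
    (hφUspc : ∀ s, StrictPseudoConvexAt E (φU s) (φU' s) pbar)
    -- multipliers, possibly depending on the feasible point `p`
    (hkkt : ∀ p, p ∈ E → (∀ u, ψ u p ≤ 0) →
      ∃ (lamL lamU : Fin l → ℝ) (μL μU : Fin t → ℝ),
        (∀ s, 0 < lamL s) ∧ (∀ s, 0 < lamU s) ∧
        (∀ u, 0 ≤ μL u) ∧ (∀ u, 0 ≤ μU u) ∧
        0 ≤ ∑ s, lamL s * φL' s (p - pbar) + ∑ u, μL u * ψ' u (p - pbar) ∧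
        0 ≤ ∑ s, lamU s * φU' s (p - pbar) + ∑ u, μU u * ψ' u (p - pbar) ∧
        (∀ u, μL u * ψ u pbar = 0 ∧ μU u * ψ u pbar = 0)) :
    ¬ ∃ phat, (phat ∈ E ∧ ∀ u, ψ u phat ≤ 0) ∧
      (∀ s, LUle (φL s phat) (φU s phat) (φL s pbar) (φU s pbar)) ∧
      (∃ h, LUlt (φL h phat) (φU h phat) (φL h pbar) (φU h pbar)) := by
  rintro ⟨phat, ⟨hpE, hpF⟩, hle, h, hlt⟩
  by_cases hne : phat = pbar
  · rcases hlt.2 with h1 | h1 <;> exact h1 (by rw [hne])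
  obtain ⟨lamL, lamU, μL, μU, hlamL, hlamU, hμL, hμU, hL, hU, hcs⟩ := hkkt phat hpE hpF
  have hsum1 : ∑ s, lamL s * φL' s (phat - pbar) < 0 := by
    apply Finset.sum_neg
    · intro s _
      exact mul_neg_of_pos_of_neg (hlamL s) (hφLspc s phat hpE hne (hle s).1)
    · exact ⟨h, Finset.mem_univ h⟩
  have hsum2 : ∑ u, μL u * ψ' u (phat - pbar) ≤ 0 := by
    apply Finset.sum_nonpos
    intro u _
    rcases eq_or_lt_of_le (hμL u) with heq | hpos
    · simp [← heq]
    · have hψ0 : ψ u pbar = 0 := by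
        have := (hcs u).1
        rcases mul_eq_zero.1 this with h' | h'
        · exact absurd h' (ne_of_gt hpos)
        · exact h'
      have := hψspc u hψ0 phat hpE hne (by rw [hψ0]; exact hpF u)
      exact le_of_lt (mul_neg_of_pos_of_neg hpos this)
  linarith
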